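/- Let (A; R) be a finite set system with δ ≥ 0 and C ≤ A self-sufficient. For a flat F of the restricted matroid (C, cl_C), write F̃ = cl(F) for its closure in PG(A; R). Then for flats F₁, F₂ of (C, cl_C): F̃₁ ∩ F̃₂ = (F₁ ∩ F₂)~, i.e., the closure in A of F₁ ∩ F₂ equals cl(F₁) ∩ cl(F₂). -/

import Mathlib

open Finset

/-- Predimension of `X`: `|X| - |{r ∈ R : r ⊆ X}|`. -/
def delta {α : Type*} [DecidableEq α] (R : Finset (Finset α)) (X : Finset α) : ℤ :=
  (X.card : ℤ) - ((R.filter (fun r => r ⊆ X)).card : ℤ)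

/-- Closure defined from the dimension function: `cl(X) = {y ∈ A : d(X ∪ {y}) = d(X)}`. -/
def clFn {α : Type*} [DecidableEq α] (A : Finset α) (d : Finset α → ℤ) (X : Finset α) :
    Finset α :=
  A.filter (fun y => d (insert y X) = d X)

/-- The predimension is submodular. -/
lemma delta_submod {α : Type*} [DecidableEq α] (R : Finset (Finset α)) (X Y : Finset α) :
    delta R (X ∪ Y) + delta R (X ∩ Y) ≤ delta R X + delta R Y := by
  have hfu : R.filter (fun r => r ⊆ X) ∪ R.filter (fun r => r ⊆ Y)
      ⊆ R.filter (fun r => r ⊆ X ∪ Y) := by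
    intro r hr
    simp only [mem_union, mem_filter] at hr ⊢
    rcases hr with ⟨h, h'⟩ | ⟨h, h'⟩
    · exact ⟨h, h'.trans subset_union_left⟩
    · exact ⟨h, h'.trans subset_union_right⟩
  have hfi : R.filter (fun r => r ⊆ X) ∩ R.filter (fun r => r ⊆ Y)
      = R.filter (fun r => r ⊆ X ∩ Y) := by
    ext r
    simp only [mem_inter, mem_filter, subset_inter_iff]
    tauto
  have h1 : (R.filter (fun r => r ⊆ X)).card + (R.filter (fun r => r ⊆ Y)).card
      ≤ (R.filter (fun r => r ⊆ X ∪ Y)).card + (R.filter (fun r => r ⊆ X ∩ Y)).card := by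
    calc (R.filter (fun r => r ⊆ X)).card + (R.filter (fun r => r ⊆ Y)).card
        = (R.filter (fun r => r ⊆ X) ∪ R.filter (fun r => r ⊆ Y)).card
          + (R.filter (fun r => r ⊆ X) ∩ R.filter (fun r => r ⊆ Y)).card :=
          (card_union_add_card_inter _ _).symm
      _ = (R.filter (fun r => r ⊆ X) ∪ R.filter (fun r => r ⊆ Y)).card
          + (R.filter (fun r => r ⊆ X ∩ Y)).card := by rw [hfi]
      _ ≤ _ := add_le_add (card_le_card hfu) le_rfl
  have h2 : (X ∪ Y).card + (X ∩ Y).card = X.card + Y.card := card_union_add_card_inter X Y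
  have h1' : ((R.filter (fun r => r ⊆ X)).card : ℤ) + ((R.filter (fun r => r ⊆ Y)).card : ℤ)
      ≤ ((R.filter (fun r => r ⊆ X ∪ Y)).card : ℤ)
        + ((R.filter (fun r => r ⊆ X ∩ Y)).card : ℤ) := by exact_mod_cast h1
  have h2' : ((X ∪ Y).card : ℤ) + ((X ∩ Y).card : ℤ) = (X.card : ℤ) + (Y.card : ℤ) := by
    exact_mod_cast h2
  unfold delta
  linarith

/-- Exact submodularity: the defect is the number of relations crossing `X` and `Y`. -/
lemma delta_submod_eq {α : Type*} [DecidableEq α] (R : Finset (Finset α)) (X Y : Finset α) :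
    delta R (X ∪ Y) + delta R (X ∩ Y)
      + ((R.filter (fun r => r ⊆ X ∪ Y ∧ ¬ r ⊆ X ∧ ¬ r ⊆ Y)).card : ℤ)
      = delta R X + delta R Y := by
  classical
  set P := R.filter (fun r => r ⊆ X) with hP
  set Q := R.filter (fun r => r ⊆ Y) with hQ
  set S := R.filter (fun r => r ⊆ X ∪ Y) with hS
  have hfi : P ∩ Q = R.filter (fun r => r ⊆ X ∩ Y) := by
    ext r
    simp only [hP, hQ, mem_inter, mem_filter, subset_inter_iff]
    tauto
  have hsplit : (S.filter (fun r => r ⊆ X ∨ r ⊆ Y)).card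
      + (S.filter (fun r => ¬ (r ⊆ X ∨ r ⊆ Y))).card = S.card :=
    card_filter_add_card_filter_not _
  have hpos' : S.filter (fun r => r ⊆ X ∨ r ⊆ Y) = P ∪ Q := by
    ext r
    simp only [hS, hP, hQ, mem_filter, mem_union, filter_filter]
    constructor
    · rintro ⟨hr, -, h | h⟩
      · exact Or.inl ⟨hr, h⟩
      · exact Or.inr ⟨hr, h⟩
    · rintro (⟨hr, h⟩ | ⟨hr, h⟩)
      · exact ⟨hr, h.trans subset_union_left, Or.inl h⟩
      · exact ⟨hr, h.trans subset_union_right, Or.inr h⟩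
  have hneg' : S.filter (fun r => ¬ (r ⊆ X ∨ r ⊆ Y))
      = R.filter (fun r => r ⊆ X ∪ Y ∧ ¬ r ⊆ X ∧ ¬ r ⊆ Y) := by
    rw [hS, filter_filter]
    apply filter_congr
    intro r _
    tauto
  have hPQ : (P ∪ Q).card + (P ∩ Q).card = P.card + Q.card := card_union_add_card_inter P Q
  have hcard : (X ∪ Y).card + (X ∩ Y).card = X.card + Y.card := card_union_add_card_inter X Y
  rw [hpos', hneg'] at hsplit
  have hsplit' : ((P ∪ Q).card : ℤ)
      + ((R.filter (fun r => r ⊆ X ∪ Y ∧ ¬ r ⊆ X ∧ ¬ r ⊆ Y)).card : ℤ) = (S.card : ℤ) := by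
    exact_mod_cast hsplit
  have hPQ' : ((P ∪ Q).card : ℤ) + ((R.filter (fun r => r ⊆ X ∩ Y)).card : ℤ)
      = (P.card : ℤ) + (Q.card : ℤ) := by
    rw [← hfi]; exact_mod_cast hPQ
  have hcard' : ((X ∪ Y).card : ℤ) + ((X ∩ Y).card : ℤ) = (X.card : ℤ) + (Y.card : ℤ) := by
    exact_mod_cast hcard
  simp only [delta, ← hP, ← hQ, ← hS]
  linarith

/-- If `C ≤ A` and `F₁`, `F₂` are flats of the restriction to `C`, then
`cl(F₁) ∩ cl(F₂) = cl(F₁ ∩ F₂)` in `PG(A; R)`. -/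
theorem closure_inter_of_selfSufficient {α : Type*} [DecidableEq α]
    (A : Finset α) (R : Finset (Finset α))
    (hR : ∀ r ∈ R, r.Nonempty ∧ r ⊆ A)
    (hpos : ∀ X ⊆ A, 0 ≤ delta R X)
    (d : Finset α → ℤ)
    (hd : ∀ X ⊆ A, IsLeast {z : ℤ | ∃ Y : Finset α, X ⊆ Y ∧ Y ⊆ A ∧ z = delta R Y} (d X))
    (C : Finset α) (hCA : C ⊆ A)
    (hC : ∀ B : Finset α, C ⊆ B → B ⊆ A → delta R C ≤ delta R B)
    (F₁ F₂ : Finset α)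
    (hF₁ : F₁ ⊆ C ∧ ∀ y ∈ C, d (insert y F₁) = d F₁ → y ∈ F₁)
    (hF₂ : F₂ ⊆ C ∧ ∀ y ∈ C, d (insert y F₂) = d F₂ → y ∈ F₂) :
    clFn A d F₁ ∩ clFn A d F₂ = clFn A d (F₁ ∩ F₂) := by
  classical
  have dle : ∀ X Y : Finset α, X ⊆ Y → Y ⊆ A → d X ≤ delta R Y := by
    intro X Y hXY hYA
    exact (hd X (hXY.trans hYA)).2 ⟨Y, hXY, hYA, rfl⟩
  have dwit : ∀ X : Finset α, X ⊆ A → ∃ Y, X ⊆ Y ∧ Y ⊆ A ∧ d X = delta R Y :=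
    fun X hX => (hd X hX).1
  have dmono : ∀ X Y : Finset α, X ⊆ Y → Y ⊆ A → d X ≤ d Y := by
    intro X Y hXY hYA
    obtain ⟨Z, hYZ, hZA, hZ⟩ := dwit Y hYA
    rw [hZ]
    exact dle X Z (hXY.trans hYZ) hZA
  have hF₁A : F₁ ⊆ A := hF₁.1.trans hCA
  have hF₂A : F₂ ⊆ A := hF₂.1.trans hCA
  have hIA : F₁ ∩ F₂ ⊆ A := inter_subset_left.trans hF₁A
  -- flats of the restriction have delta = d
  have key : ∀ F : Finset α, F ⊆ C → (∀ y ∈ C, d (insert y F) = d F → y ∈ F) →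
      delta R F = d F := by
    intro F hFC hflat
    have hFA : F ⊆ A := hFC.trans hCA
    obtain ⟨Z, hFZ, hZA, hZ⟩ := dwit F hFA
    have hZCle : delta R (Z ∩ C) ≤ delta R Z := by
      have hsub := delta_submod R Z C
      have hss := hC (Z ∪ C) subset_union_right (union_subset hZA hCA)
      linarith
    have hZC : Z ∩ C ⊆ F := by
      intro z hz
      rw [mem_inter] at hz
      apply hflat z hz.2
      have ha : d (insert z F) ≤ delta R (Z ∩ C) :=
        dle _ _ (insert_subset (mem_inter.2 hz) (subset_inter hFZ hFC))
          (inter_subset_left.trans hZA)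
      have hb : d F ≤ d (insert z F) :=
        dmono _ _ (subset_insert _ _) (insert_subset (hZA hz.1) hFA)
      omega
    have heq : Z ∩ C = F := subset_antisymm hZC (subset_inter hFZ hFC)
    rw [heq] at hZCle
    have h3 : d F ≤ delta R F := dle F F Subset.rfl hFA
    omega
  have hd1 : delta R F₁ = d F₁ := key F₁ hF₁.1 hF₁.2
  have hd2 : delta R F₂ = d F₂ := key F₂ hF₂.1 hF₂.2
  have ss1 : ∀ B : Finset α, F₁ ⊆ B → B ⊆ A → delta R F₁ ≤ delta R B := by
    intro B h1 h2; rw [hd1]; exact dle _ _ h1 h2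
  have ss2 : ∀ B : Finset α, F₂ ⊆ B → B ⊆ A → delta R F₂ ≤ delta R B := by
    intro B h1 h2; rw [hd2]; exact dle _ _ h1 h2
  -- the intersection of the two flats is self-sufficient
  have ssInt : ∀ B : Finset α, F₁ ∩ F₂ ⊆ B → B ⊆ A → delta R (F₁ ∩ F₂) ≤ delta R B := by
    intro B hB hBA
    have e1 : delta R (B ∩ F₁) ≤ delta R B := by
      have hsub := delta_submod R B F₁
      have := ss1 (B ∪ F₁) subset_union_right (union_subset hBA hF₁A)
      linarith
    have e2 : delta R ((B ∩ F₁) ∩ F₂) ≤ delta R (B ∩ F₁) := by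
      have hsub := delta_submod R (B ∩ F₁) F₂
      have := ss2 ((B ∩ F₁) ∪ F₂)
        subset_union_right (union_subset (inter_subset_left.trans hBA) hF₂A)
      linarith
    have e3 : (B ∩ F₁) ∩ F₂ = F₁ ∩ F₂ := by
      rw [inter_assoc]
      exact inter_eq_right.mpr hB
    rw [e3] at e2
    linarith
  have dInt : delta R (F₁ ∩ F₂) = d (F₁ ∩ F₂) := by
    obtain ⟨Y, h1, h2, h3⟩ := dwit (F₁ ∩ F₂) hIA
    have h4 := ssInt Y h1 h2
    have h5 : d (F₁ ∩ F₂) ≤ delta R (F₁ ∩ F₂) := dle _ _ Subset.rfl hIA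
    omega
  ext y
  simp only [clFn, mem_inter, mem_filter]
  constructor
  · rintro ⟨⟨hyA, h1⟩, ⟨-, h2⟩⟩
    refine ⟨hyA, ?_⟩
    obtain ⟨Z₁, hZ₁s, hZ₁A, hZ₁⟩ := dwit (insert y F₁) (insert_subset hyA hF₁A)
    obtain ⟨Z₂, hZ₂s, hZ₂A, hZ₂⟩ := dwit (insert y F₂) (insert_subset hyA hF₂A)
    have hF₁Z : F₁ ⊆ Z₁ := (subset_insert y F₁).trans hZ₁s
    have hF₂Z : F₂ ⊆ Z₂ := (subset_insert y F₂).trans hZ₂s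
    have hdZ₁ : delta R Z₁ = d F₁ := by rw [← hZ₁, h1]
    have hdZ₂ : delta R Z₂ = d F₂ := by rw [← hZ₂, h2]
    -- Zᵢ ∩ C = Fᵢ
    have hZC : ∀ (F Z : Finset α), F ⊆ C → (∀ z ∈ C, d (insert z F) = d F → z ∈ F) →
        F ⊆ Z → Z ⊆ A → delta R Z = d F → Z ∩ C = F := by
      intro F Z hFC hflat hFZ hZA hdZ
      apply subset_antisymm
      · intro z hz
        rw [mem_inter] at hz
        apply hflat z hz.2
        have ha : d (insert z F) ≤ delta R Z :=
          dle _ _ (insert_subset hz.1 hFZ) hZA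
        have hb : d F ≤ d (insert z F) :=
          dmono _ _ (subset_insert _ _) (insert_subset (hZA hz.1) (hFC.trans hCA))
        omega
      · exact subset_inter hFZ hFC
    have e1 := hZC F₁ Z₁ hF₁.1 hF₁.2 hF₁Z hZ₁A hdZ₁
    have e2 := hZC F₂ Z₂ hF₂.1 hF₂.2 hF₂Z hZ₂A hdZ₂
    -- δ(F₁ ∪ F₂) ≤ δ(Z₁ ∪ Z₂)
    have hU : delta R (F₁ ∪ F₂) ≤ delta R (Z₁ ∪ Z₂) := by
      have hsub := delta_submod R (Z₁ ∪ Z₂) C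
      have hCss := hC ((Z₁ ∪ Z₂) ∪ C) subset_union_right
        (union_subset (union_subset hZ₁A hZ₂A) hCA)
      have hdist : (Z₁ ∪ Z₂) ∩ C = F₁ ∪ F₂ := by
        rw [union_inter_distrib_right, e1, e2]
      rw [hdist] at hsub
      linarith
    have hsub12 := delta_submod_eq R Z₁ Z₂
    have hsubF := delta_submod_eq R F₁ F₂
    have hcross : ((R.filter (fun r => r ⊆ F₁ ∪ F₂ ∧ ¬ r ⊆ F₁ ∧ ¬ r ⊆ F₂)).card : ℤ)
        ≤ ((R.filter (fun r => r ⊆ Z₁ ∪ Z₂ ∧ ¬ r ⊆ Z₁ ∧ ¬ r ⊆ Z₂)).card : ℤ) := by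
      have hsubset : R.filter (fun r => r ⊆ F₁ ∪ F₂ ∧ ¬ r ⊆ F₁ ∧ ¬ r ⊆ F₂)
          ⊆ R.filter (fun r => r ⊆ Z₁ ∪ Z₂ ∧ ¬ r ⊆ Z₁ ∧ ¬ r ⊆ Z₂) := by
        intro r hr
        simp only [mem_filter] at hr ⊢
        obtain ⟨hrR, hrU, hr1, hr2⟩ := hr
        have hrC : r ⊆ C := hrU.trans (union_subset hF₁.1 hF₂.1)
        refine ⟨hrR, hrU.trans (union_subset_union hF₁Z hF₂Z), ?_, ?_⟩
        · intro hcon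
          exact hr1 (by rw [← e1]; exact subset_inter hcon hrC)
        · intro hcon
          exact hr2 (by rw [← e2]; exact subset_inter hcon hrC)
      exact_mod_cast card_le_card hsubset
    have hle : d (insert y (F₁ ∩ F₂)) ≤ delta R (Z₁ ∩ Z₂) := by
      apply dle
      · exact insert_subset (mem_inter.2 ⟨hZ₁s (mem_insert_self _ _), hZ₂s (mem_insert_self _ _)⟩)
          (subset_inter (inter_subset_left.trans hF₁Z) (inter_subset_right.trans hF₂Z))
      · exact inter_subset_left.trans hZ₁A
    have hge : d (F₁ ∩ F₂) ≤ d (insert y (F₁ ∩ F₂)) :=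
      dmono _ _ (subset_insert _ _) (insert_subset hyA hIA)
    linarith
  · rintro ⟨hyA, hy⟩
    have main : ∀ F : Finset α, F ⊆ A → F₁ ∩ F₂ ⊆ F → d (insert y F) = d F := by
      intro F hFA hIF
      obtain ⟨Y₁, hY₁s, hY₁A, hY₁⟩ := dwit (insert y (F₁ ∩ F₂)) (insert_subset hyA hIA)
      obtain ⟨Y₂, hY₂s, hY₂A, hY₂⟩ := dwit F hFA
      have h1 : d (insert y F) ≤ delta R (Y₁ ∪ Y₂) := by
        apply dle
        · exact insert_subset (mem_union_left _ (hY₁s (mem_insert_self _ _)))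
            (hY₂s.trans subset_union_right)
        · exact union_subset hY₁A hY₂A
      have h2 := delta_submod R Y₁ Y₂
      have h3 : d (F₁ ∩ F₂) ≤ delta R (Y₁ ∩ Y₂) := by
        apply dle
        · exact subset_inter ((subset_insert _ _).trans hY₁s) (hIF.trans hY₂s)
        · exact inter_subset_left.trans hY₁A
      have h4 : d F ≤ d (insert y F) :=
        dmono _ _ (subset_insert _ _) (insert_subset hyA hFA)
      linarith
    exact ⟨⟨hyA, main F₁ hF₁A inter_subset_left⟩,
           ⟨hyA, main F₂ hF₂A inter_subset_right⟩⟩
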